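/- Let Ĥ be a weakly balanced bipartite signed graph with a special min ordering ≤, and let Ĝ be a bipartite signed graph without purely red edges. Suppose C is a closed walk in Ĝ and f, f' are two homomorphisms of Ĝ to Ĥ such that f(v) ≤ f'(v) for all vertices v of Ĝ, every edge of f(C) is blue, and some edge of f'(C) is bicoloured. Then the sets of vertices of the closed walks f(C) and f'(C) are disjoint. -/

import Mathlib

variable {A B U W : Type*}

/-- A min ordering of a bipartite graph: a pair of linear (strict total) orders on the
two parts such that if `ab`, `a'b'` are edges with `a <_A a'` and `b' <_B b`, then `ab'`
is an edge. -/
def IsMinOrdering (E : A → B → Prop) (ltA : A → A → Prop) (ltB : B → B → Prop) : Prop :=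
  IsStrictTotalOrder A ltA ∧ IsStrictTotalOrder B ltB ∧
    ∀ a a' b b', E a b → E a' b' → ltA a a' → ltB b' b → E a b'

/-- A special min ordering of a weakly balanced bipartite signed graph: a min ordering
such that at each vertex all bicoloured neighbours precede all blue neighbours. -/
def IsSpecialMinOrdering (E bic : A → B → Prop)
    (ltA : A → A → Prop) (ltB : B → B → Prop) : Prop :=
  IsMinOrdering E ltA ltB ∧
    (∀ (a : A) (b b' : B), bic a b → E a b' → ¬ bic a b' → ltB b b') ∧
    (∀ (b : B) (a a' : A), bic a b → E a' b → ¬ bic a' b → ltA a a')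

/-- Auxiliary half-step: given a "sandwich" bicoloured edge `(γ, δ)` lying strictly
above the `f`-walk and weakly below the `f'`-walk on the first `n+1` positions of each
part, extend the `A`-side domination to position `n + 1` (possibly replacing `γ`). -/
theorem statement8_halfstep {A B : Type*} (E bic : A → B → Prop)
    (ltA : A → A → Prop) (ltB : B → B → Prop)
    (hbicE : ∀ a b, bic a b → E a b)
    (triA : ∀ a b, ltA a b ∨ a = b ∨ ltA b a)
    (asymA : ∀ a b, ltA a b → ltA b a → False)
    (transA : ∀ a b c, ltA a b → ltA b c → ltA a c)
    (asymB : ∀ a b, ltB a b → ltB b a → False)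
    (transB : ∀ a b c, ltB a b → ltB b c → ltB a c)
    (hmin : ∀ a a' b b', E a b → E a' b' → ltA a a' → ltB b' b → E a b')
    (hsp2 : ∀ (a : A) (b b' : B), bic a b → E a b' → ¬ bic a b' → ltB b b')
    (hsp3 : ∀ (b : B) (a a' : A), bic a b → E a' b → ¬ bic a' b → ltA a a')
    (n : ℕ) (u : ℕ → A) (v : ℕ → B) (u' : ℕ → A) (v' : ℕ → B)
    (γ : A) (δ : B) (hγδ : bic γ δ)
    (domA : ∀ i, i ≤ n → ltA (u i) γ ∧ (γ = u' i ∨ ltA γ (u' i)))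
    (domB : ∀ i, i ≤ n → ltB (v i) δ ∧ (δ = v' i ∨ ltB δ (v' i)))
    (hx1 : ∀ i, i ≤ n → E (u i) (v i)) (hx1b : ∀ i, i ≤ n → ¬ bic (u i) (v i))
    (hx2 : ∀ i, i ≤ n → E (u (i + 1)) (v i)) (hx2b : ∀ i, i ≤ n → ¬ bic (u (i + 1)) (v i))
    (hy2n : E (u' (n + 1)) (v' n))
    (hlen : u (n + 1) = u' (n + 1) ∨ ltA (u (n + 1)) (u' (n + 1))) :
    ∃ γ', bic γ' δ ∧ ∀ i, i ≤ n + 1 → ltA (u i) γ' ∧ (γ' = u' i ∨ ltA γ' (u' i)) := by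
  -- Claim 1 : the new f-vertex is strictly below γ
  have hC1 : ltA (u (n + 1)) γ := by
    rcases triA (u (n + 1)) γ with h | h | h
    · exact h
    · exfalso
      have hb : bic (u (n + 1)) δ := by rw [h]; exact hγδ
      exact asymB _ _ ((domB n le_rfl).1) (hsp2 _ _ _ hb (hx2 n le_rfl) (hx2b n le_rfl))
    · exfalso
      have he : E γ (v n) :=
        hmin γ (u (n + 1)) δ (v n) (hbicE _ _ hγδ) (hx2 n le_rfl) h ((domB n le_rfl).1)
      by_cases hc : bic γ (v n)
      · exact asymA _ _ ((domA n le_rfl).1)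
          (hsp3 (v n) γ (u n) hc (hx1 n le_rfl) (hx1b n le_rfl))
      · exact asymB _ _ ((domB n le_rfl).1) (hsp2 γ δ (v n) hγδ he hc)
  have hvn : ltB (v n) (v' n) := by
    rcases domB n le_rfl with ⟨h1, h2 | h2⟩
    · rw [← h2]; exact h1
    · exact transB _ _ _ h1 h2
  -- Claim 0 : strictness at the new position
  have hC0 : ltA (u (n + 1)) (u' (n + 1)) := by
    rcases hlen with h | h
    · exfalso
      have hE : E (u (n + 1)) (v' n) := by rw [h]; exact hy2n
      by_cases hc : bic (u (n + 1)) (v' n)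
      · exact asymB _ _ hvn (hsp2 _ _ _ hc (hx2 n le_rfl) (hx2b n le_rfl))
      · rcases (domB n le_rfl).2 with hd | hd
        · refine asymA _ _ hC1 (hsp3 (v' n) γ (u (n + 1)) ?_ hE hc)
          rw [← hd]; exact hγδ
        · have hE2 : E (u (n + 1)) δ :=
            hmin (u (n + 1)) γ (v' n) δ hE (hbicE _ _ hγδ) hC1 hd
          by_cases hc2 : bic (u (n + 1)) δ
          · exact asymB _ _ ((domB n le_rfl).1)
              (hsp2 _ _ _ hc2 (hx2 n le_rfl) (hx2b n le_rfl))
          · exact asymA _ _ hC1 (hsp3 δ γ (u (n + 1)) hγδ hE2 hc2)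
    · exact h
  -- main case split on γ vs the new f'-vertex
  rcases triA γ (u' (n + 1)) with h | h | h
  · refine ⟨γ, hγδ, fun i hi => ?_⟩
    rcases Nat.eq_or_lt_of_le hi with hi' | hi'
    · rw [hi']; exact ⟨hC1, Or.inr h⟩
    · exact domA i (Nat.lt_succ_iff.mp hi')
  · refine ⟨γ, hγδ, fun i hi => ?_⟩
    rcases Nat.eq_or_lt_of_le hi with hi' | hi'
    · rw [hi']; exact ⟨hC1, Or.inl h⟩
    · exact domA i (Nat.lt_succ_iff.mp hi')
  · -- γ is strictly above the new f'-vertex w := u' (n+1); replace γ by w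
    have hwδ : bic (u' (n + 1)) δ := by
      rcases (domB n le_rfl).2 with hd | hd
      · by_cases hc : bic (u' (n + 1)) (v' n)
        · rw [hd]; exact hc
        · exact absurd (hsp3 (v' n) γ (u' (n + 1)) (by rw [← hd]; exact hγδ) hy2n hc)
            (fun hh => asymA _ _ h hh)
      · have hE : E (u' (n + 1)) δ :=
          hmin (u' (n + 1)) γ (v' n) δ hy2n (hbicE _ _ hγδ) h hd
        by_cases hc : bic (u' (n + 1)) δ
        · exact hc
        · exact absurd (hsp3 δ γ (u' (n + 1)) hγδ hE hc) (fun hh => asymA _ _ h hh)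
    -- descending induction: all old f-vertices are strictly below w
    have hS : ∀ j i, i + j = n + 1 → ltA (u i) (u' (n + 1)) := by
      intro j
      induction j with
      | zero =>
        intro i hi
        have : i = n + 1 := by omega
        rw [this]; exact hC0
      | succ j ih =>
        intro i hi
        have hin : i ≤ n := by omega
        have hnext : ltA (u (i + 1)) (u' (n + 1)) := ih (i + 1) (by omega)
        rcases triA (u i) (u' (n + 1)) with h1 | h1 | h1
        · exact h1
        · exfalso
          have hb : bic (u i) δ := by rw [h1]; exact hwδ
          exact asymB _ _ ((domB i hin).1) (hsp2 _ _ _ hb (hx1 i hin) (hx1b i hin))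
        · exfalso
          have hE : E (u' (n + 1)) (v i) :=
            hmin (u' (n + 1)) (u i) δ (v i) (hbicE _ _ hwδ) (hx1 i hin) h1 ((domB i hin).1)
          by_cases hc : bic (u' (n + 1)) (v i)
          · exact asymA _ _ hnext
              (hsp3 (v i) (u' (n + 1)) (u (i + 1)) hc (hx2 i hin) (hx2b i hin))
          · exact asymB _ _ ((domB i hin).1) (hsp2 (u' (n + 1)) δ (v i) hwδ hE hc)
    refine ⟨u' (n + 1), hwδ, fun i hi => ?_⟩
    rcases Nat.eq_or_lt_of_le hi with hi' | hi'
    · rw [hi']; exact ⟨hC0, Or.inl rfl⟩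
    · have hin : i ≤ n := Nat.lt_succ_iff.mp hi'
      refine ⟨hS (n + 1 - i) i (by omega), ?_⟩
      rcases (domA i hin).2 with hg | hg
      · exact Or.inr (by rw [← hg]; exact h)
      · exact Or.inr (transA _ _ _ h hg)

/-- Key lemma: along an infinite walk (of shape `u 0, v 0, u 1, v 1, …` with edges
`(u i, v i)` and `(u (i+1), v i)`) whose `f`-image is entirely blue, whose `f'`-image
starts with a bicoloured edge, and with `f ≤ f'` pointwise, every `f`-vertex is
strictly below every `f'`-vertex of the same part. -/
theorem statement8_key {A B : Type*} (E bic : A → B → Prop)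
    (ltA : A → A → Prop) (ltB : B → B → Prop)
    (hbicE : ∀ a b, bic a b → E a b)
    (triA : ∀ a b, ltA a b ∨ a = b ∨ ltA b a)
    (asymA : ∀ a b, ltA a b → ltA b a → False)
    (transA : ∀ a b c, ltA a b → ltA b c → ltA a c)
    (triB : ∀ a b, ltB a b ∨ a = b ∨ ltB b a)
    (asymB : ∀ a b, ltB a b → ltB b a → False)
    (transB : ∀ a b c, ltB a b → ltB b c → ltB a c)
    (hmin : ∀ a a' b b', E a b → E a' b' → ltA a a' → ltB b' b → E a b')
    (hsp2 : ∀ (a : A) (b b' : B), bic a b → E a b' → ¬ bic a b' → ltB b b')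
    (hsp3 : ∀ (b : B) (a a' : A), bic a b → E a' b → ¬ bic a' b → ltA a a')
    (u : ℕ → A) (v : ℕ → B) (u' : ℕ → A) (v' : ℕ → B)
    (hx1 : ∀ i, E (u i) (v i)) (hx1b : ∀ i, ¬ bic (u i) (v i))
    (hx2 : ∀ i, E (u (i + 1)) (v i)) (hx2b : ∀ i, ¬ bic (u (i + 1)) (v i))
    (hy1 : ∀ i, E (u' i) (v' i)) (hy2 : ∀ i, E (u' (i + 1)) (v' i))
    (hleA : ∀ i, u i = u' i ∨ ltA (u i) (u' i))
    (hleB : ∀ i, v i = v' i ∨ ltB (v i) (v' i))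
    (h0 : bic (u' 0) (v' 0)) :
    ∀ i j, ltA (u i) (u' j) ∧ ltB (v i) (v' j) := by
  have h00A : ltA (u 0) (u' 0) := by
    rcases hleA 0 with h | h
    · exfalso
      have hb : bic (u 0) (v' 0) := by rw [h]; exact h0
      have hlt := hsp2 (u 0) (v' 0) (v 0) hb (hx1 0) (hx1b 0)
      rcases hleB 0 with h2 | h2
      · rw [h2] at hlt; exact asymB _ _ hlt hlt
      · exact asymB _ _ h2 hlt
    · exact h
  have h00B : ltB (v 0) (v' 0) := by
    rcases hleB 0 with h | h
    · exfalso
      have hE : E (u 0) (v' 0) := by rw [← h]; exact hx1 0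
      have hnb : ¬ bic (u 0) (v' 0) := by rw [← h]; exact hx1b 0
      exact asymA _ _ h00A (hsp3 (v' 0) (u' 0) (u 0) h0 hE hnb)
    · exact h
  have INV : ∀ n, ∃ γ δ, bic γ δ ∧
      (∀ i, i ≤ n → ltA (u i) γ ∧ (γ = u' i ∨ ltA γ (u' i))) ∧
      (∀ i, i ≤ n → ltB (v i) δ ∧ (δ = v' i ∨ ltB δ (v' i))) := by
    intro n
    induction n with
    | zero =>
      refine ⟨u' 0, v' 0, h0, fun i hi => ?_, fun i hi => ?_⟩
      · rw [Nat.le_zero.mp hi]; exact ⟨h00A, Or.inl rfl⟩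
      · rw [Nat.le_zero.mp hi]; exact ⟨h00B, Or.inl rfl⟩
    | succ n ih =>
      obtain ⟨γ, δ, hγδ, dA, dB⟩ := ih
      obtain ⟨γ₁, hγ₁, dA₁⟩ :=
        statement8_halfstep E bic ltA ltB hbicE triA asymA transA asymB transB hmin hsp2 hsp3
          n u v u' v' γ δ hγδ dA dB
          (fun i _ => hx1 i) (fun i _ => hx1b i) (fun i _ => hx2 i) (fun i _ => hx2b i)
          (hy2 n) (hleA (n + 1))
      obtain ⟨δ₂, hδ₂, dB₂⟩ :=
        statement8_halfstep (fun b a => E a b) (fun b a => bic a b) ltB ltA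
          (fun b a hba => hbicE a b hba) triB asymB transB asymA transA
          (fun b b' a a' h1 h2 hb ha => hmin a' a b' b h2 h1 ha hb)
          (fun b a a' hb hE hnb => hsp3 b a a' hb hE hnb)
          (fun a b b' hb hE hnb => hsp2 a b b' hb hE hnb)
          n v (fun i => u (i + 1)) v' (fun i => u' (i + 1)) δ γ₁ hγ₁
          dB (fun i hi => dA₁ (i + 1) (by omega))
          (fun i hi => hx2 i) (fun i hi => hx2b i)
          (fun i hi => hx1 (i + 1)) (fun i hi => hx1b (i + 1))
          (hy1 (n + 1)) (hleB (n + 1))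
      exact ⟨γ₁, δ₂, hδ₂, dA₁, dB₂⟩
  intro i j
  obtain ⟨γ, δ, hγδ, dA, dB⟩ := INV (max i j)
  constructor
  · have h1 := (dA i (le_max_left i j)).1
    rcases (dA j (le_max_right i j)).2 with h2 | h2
    · rw [← h2]; exact h1
    · exact transA _ _ _ h1 h2
  · have h1 := (dB i (le_max_left i j)).1
    rcases (dB j (le_max_right i j)).2 with h2 | h2
    · rw [← h2]; exact h1
    · exact transB _ _ _ h1 h2

/-- Let `Ĥ` (parts `A`, `B`, edges `E`, bicoloured edges `bic`) be a weakly
balanced bipartite signed graph with a special min ordering, and `Ĝ` (parts `U`, `W`,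
edges `EG`, bicoloured edges `bicG`) a bipartite signed graph without purely red edges.
Let `C` be a closed walk `p_0, q_0, p_1, q_1, …, q_{m-1}, p_m = p_0` in `Ĝ` and let
`f = (fA, fB)`, `f' = (f'A, f'B)` be homomorphisms of `Ĝ` to `Ĥ` with `f(v) ≤ f'(v)`
for every vertex `v`, such that every edge of `f(C)` is blue and some edge of `f'(C)`
is bicoloured.  Then the vertex sets of `f(C)` and `f'(C)` are disjoint. -/
theorem statement8 [Fintype A] [Fintype B] [Fintype U] [Fintype W]
    (E bic : A → B → Prop) (hbic : ∀ a b, bic a b → E a b)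
    (ltA : A → A → Prop) (ltB : B → B → Prop)
    (hspecial : IsSpecialMinOrdering E bic ltA ltB)
    (EG bicG : U → W → Prop) (hbicG : ∀ u w, bicG u w → EG u w)
    (fA f'A : U → A) (fB f'B : W → B)
    (hf : ∀ u w, EG u w → E (fA u) (fB w))
    (hfbic : ∀ u w, bicG u w → bic (fA u) (fB w))
    (hf' : ∀ u w, EG u w → E (f'A u) (f'B w))
    (hf'bic : ∀ u w, bicG u w → bic (f'A u) (f'B w))
    (hleA : ∀ u, fA u = f'A u ∨ ltA (fA u) (f'A u))
    (hleB : ∀ w, fB w = f'B w ∨ ltB (fB w) (f'B w))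
    (m : ℕ) (hm : 0 < m) (p : ℕ → U) (q : ℕ → W)
    (hpq : ∀ i < m, EG (p i) (q i)) (hqp : ∀ i < m, EG (p (i + 1)) (q i))
    (hclosed : p m = p 0)
    (hblue : ∀ i < m, ¬ bic (fA (p i)) (fB (q i)) ∧ ¬ bic (fA (p (i + 1))) (fB (q i)))
    (hbicol : ∃ i < m, bic (f'A (p i)) (f'B (q i)) ∨ bic (f'A (p (i + 1))) (f'B (q i))) :
    (∀ i ≤ m, ∀ j ≤ m, fA (p i) ≠ f'A (p j)) ∧
    (∀ i < m, ∀ j < m, fB (q i) ≠ f'B (q j)) := by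
  obtain ⟨⟨hSTA, hSTB, hmin⟩, hsp2, hsp3⟩ := hspecial
  have triA : ∀ a b, ltA a b ∨ a = b ∨ ltA b a := fun a b =>
    (em (ltA a b)).elim Or.inl (fun h1 => (em (ltA b a)).elim (fun h2 => Or.inr (Or.inr h2))
      (fun h2 => Or.inr (Or.inl (hSTA.trichotomous a b h1 h2))))
  have transA : ∀ a b c, ltA a b → ltA b c → ltA a c := fun a b c => hSTA.trans a b c
  have asymA : ∀ a b, ltA a b → ltA b a → False :=
    fun a b h1 h2 => hSTA.irrefl a (hSTA.trans a b a h1 h2)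
  have triB : ∀ a b, ltB a b ∨ a = b ∨ ltB b a := fun a b =>
    (em (ltB a b)).elim Or.inl (fun h1 => (em (ltB b a)).elim (fun h2 => Or.inr (Or.inr h2))
      (fun h2 => Or.inr (Or.inl (hSTB.trichotomous a b h1 h2))))
  have transB : ∀ a b c, ltB a b → ltB b c → ltB a c := fun a b c => hSTB.trans a b c
  have asymB : ∀ a b, ltB a b → ltB b a → False :=
    fun a b h1 h2 => hSTB.irrefl a (hSTB.trans a b a h1 h2)
  -- periodic extensions of the closed walk
  set P : ℕ → U := fun k => p (k % m) with hPdef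
  set Q : ℕ → W := fun k => q (k % m) with hQdef
  have hP1 : ∀ k, P (k + 1) = p (k % m + 1) := by
    intro k
    show p ((k + 1) % m) = p (k % m + 1)
    have h1 : (k + 1) % m = (k % m + 1) % m :=
      (Nat.ModEq.add_right 1 (Nat.mod_modEq k m)).symm
    rw [h1]
    rcases Nat.eq_or_lt_of_le (Nat.succ_le_of_lt (Nat.mod_lt k hm)) with h | h
    · rw [show k % m + 1 = m from h, Nat.mod_self]; exact hclosed.symm
    · rw [Nat.mod_eq_of_lt h]
  have hPadd : ∀ r, r ≤ m → P (r + m) = p r := by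
    intro r hr
    show p ((r + m) % m) = p r
    rw [Nat.add_mod_right]
    rcases Nat.eq_or_lt_of_le hr with h | h
    · rw [h, Nat.mod_self]; exact hclosed.symm
    · rw [Nat.mod_eq_of_lt h]
  have hQadd : ∀ r, r < m → Q (r + m) = q r := by
    intro r hr
    show q ((r + m) % m) = q r
    rw [Nat.add_mod_right, Nat.mod_eq_of_lt hr]
  have hPQ : ∀ k, EG (P k) (Q k) := fun k => hpq _ (Nat.mod_lt k hm)
  have hQP : ∀ k, EG (P (k + 1)) (Q k) := by
    intro k; rw [hP1 k]; exact hqp _ (Nat.mod_lt k hm)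
  have hblue1 : ∀ k, ¬ bic (fA (P k)) (fB (Q k)) := fun k => (hblue _ (Nat.mod_lt k hm)).1
  have hblue2 : ∀ k, ¬ bic (fA (P (k + 1))) (fB (Q k)) := by
    intro k; rw [hP1 k]; exact (hblue _ (Nat.mod_lt k hm)).2
  obtain ⟨i, him, hcase⟩ := hbicol
  have hPi : P i = p i := by show p (i % m) = p i; rw [Nat.mod_eq_of_lt him]
  have hQi : Q i = q i := by show q (i % m) = q i; rw [Nat.mod_eq_of_lt him]
  have hPi1 : P (i + 1) = p (i + 1) := by
    rw [hP1 i, Nat.mod_eq_of_lt him]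
  rcases hcase with hb | hb
  · -- bicoloured edge of shape (p i, q i)
    have h0 : bic (f'A (P i)) (f'B (Q i)) := by rw [hPi, hQi]; exact hb
    have hkey := statement8_key E bic ltA ltB hbic triA asymA transA triB asymB transB
      hmin hsp2 hsp3
      (fun k => fA (P (i + k))) (fun k => fB (Q (i + k)))
      (fun k => f'A (P (i + k))) (fun k => f'B (Q (i + k)))
      (fun k => hf _ _ (hPQ (i + k))) (fun k => hblue1 (i + k))
      (fun k => hf _ _ (hQP (i + k))) (fun k => hblue2 (i + k))
      (fun k => hf' _ _ (hPQ (i + k))) (fun k => hf' _ _ (hQP (i + k)))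
      (fun k => hleA (P (i + k))) (fun k => hleB (Q (i + k))) h0
    have coverP : ∀ r, r ≤ m → ∃ k, P (i + k) = p r := by
      intro r hr
      refine ⟨r + (m - i), ?_⟩
      have h : i + (r + (m - i)) = r + m := by omega
      rw [h]; exact hPadd r hr
    have coverQ : ∀ r, r < m → ∃ k, Q (i + k) = q r := by
      intro r hr
      refine ⟨r + (m - i), ?_⟩
      have h : i + (r + (m - i)) = r + m := by omega
      rw [h]; exact hQadd r hr
    constructor
    · intro i0 hi0 j0 hj0 heq
      obtain ⟨k0, hk0⟩ := coverP i0 hi0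
      obtain ⟨l0, hl0⟩ := coverP j0 hj0
      have hlt : ltA (fA (P (i + k0))) (f'A (P (i + l0))) := (hkey k0 l0).1
      rw [hk0, hl0, heq] at hlt
      exact asymA _ _ hlt hlt
    · intro i0 hi0 j0 hj0 heq
      obtain ⟨k0, hk0⟩ := coverQ i0 hi0
      obtain ⟨l0, hl0⟩ := coverQ j0 hj0
      have hlt : ltB (fB (Q (i + k0))) (f'B (Q (i + l0))) := (hkey k0 l0).2
      rw [hk0, hl0, heq] at hlt
      exact asymB _ _ hlt hlt
  · -- bicoloured edge of shape (p (i+1), q i) : use the transposed key lemma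
    have h0 : bic (f'A (P (i + 1))) (f'B (Q i)) := by rw [hPi1, hQi]; exact hb
    have hkey := statement8_key (fun b a => E a b) (fun b a => bic a b) ltB ltA
      (fun b a hba => hbic a b hba) triB asymB transB triA asymA transA
      (fun b b' a a' h1 h2 hbb ha => hmin a' a b' b h2 h1 ha hbb)
      (fun b a a' hbb hE hnb => hsp3 b a a' hbb hE hnb)
      (fun a b b' hbb hE hnb => hsp2 a b b' hbb hE hnb)
      (fun k => fB (Q (i + k))) (fun k => fA (P (i + k + 1)))
      (fun k => f'B (Q (i + k))) (fun k => f'A (P (i + k + 1)))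
      (fun k => hf _ _ (hQP (i + k))) (fun k => hblue2 (i + k))
      (fun k => hf _ _ (hPQ (i + k + 1))) (fun k => hblue1 (i + k + 1))
      (fun k => hf' _ _ (hQP (i + k))) (fun k => hf' _ _ (hPQ (i + k + 1)))
      (fun k => hleB (Q (i + k))) (fun k => hleA (P (i + k + 1))) h0
    have coverP : ∀ r, r ≤ m → ∃ k, P (i + k + 1) = p r := by
      intro r hr
      refine ⟨r + (m - (i + 1)), ?_⟩
      have h : i + (r + (m - (i + 1))) + 1 = r + m := by omega
      rw [h]; exact hPadd r hr
    have coverQ : ∀ r, r < m → ∃ k, Q (i + k) = q r := by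
      intro r hr
      refine ⟨r + (m - i), ?_⟩
      have h : i + (r + (m - i)) = r + m := by omega
      rw [h]; exact hQadd r hr
    constructor
    · intro i0 hi0 j0 hj0 heq
      obtain ⟨k0, hk0⟩ := coverP i0 hi0
      obtain ⟨l0, hl0⟩ := coverP j0 hj0
      have hlt : ltA (fA (P (i + k0 + 1))) (f'A (P (i + l0 + 1))) := (hkey k0 l0).2
      rw [hk0, hl0, heq] at hlt
      exact asymA _ _ hlt hlt
    · intro i0 hi0 j0 hj0 heq
      obtain ⟨k0, hk0⟩ := coverQ i0 hi0
      obtain ⟨l0, hl0⟩ := coverQ j0 hj0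
      have hlt : ltB (fB (Q (i + k0))) (f'B (Q (i + l0))) := (hkey k0 l0).1
      rw [hk0, hl0, heq] at hlt
      exact asymB _ _ hlt hlt
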